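/- There exists a 5-progression-free subset S of F_5^3 with |S| = 70 (i.e., r_5(F_5^3) ≥ 70). -/
import Mathlib


/-- A subset `S` of `F_p^n` is `k`-progression-free if there are no `a, d` with `d ≠ 0`
such that `a + i • d ∈ S` for all `i ∈ {0, …, k-1}`. -/
def ProgFree (p n k : ℕ) (S : Finset (Fin n → ZMod p)) : Prop :=
  ¬ ∃ a d : Fin n → ZMod p, d ≠ 0 ∧ ∀ i : ℕ, i < k → a + (i : ZMod p) • d ∈ S

def myMask : ℕ := 6296765451834178942362186628892122523

def good (x y z : ZMod 5) : Prop :=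
  (myMask >>> (x.val * 25 + y.val * 5 + z.val)) % 2 = 1

instance : DecidablePred fun t : ZMod 5 × ZMod 5 × ZMod 5 => good t.1 t.2.1 t.2.2 :=
  fun _ => Nat.decEq _ _

instance (x y z : ZMod 5) : Decidable (good x y z) := Nat.decEq _ _

def myS : Finset (Fin 3 → ZMod 5) :=
  Finset.univ.filter (fun x => good (x 0) (x 1) (x 2))

set_option maxRecDepth 10000 in
set_option maxHeartbeats 2000000 in
lemma key : ∀ a₀ a₁ a₂ d₀ d₁ d₂ : ZMod 5, ¬(d₀ = 0 ∧ d₁ = 0 ∧ d₂ = 0) →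
    ∃ i : Fin 5, ¬ good (a₀ + ((i : ℕ) : ZMod 5) * d₀) (a₁ + ((i : ℕ) : ZMod 5) * d₁)
      (a₂ + ((i : ℕ) : ZMod 5) * d₂) := by decide

set_option maxRecDepth 10000 in
set_option maxHeartbeats 2000000 in
lemma mycard : myS.card = 70 := by decide

theorem stmt_17 :
    ∃ S : Finset (Fin 3 → ZMod 5), ProgFree 5 3 5 S ∧ S.card = 70 := by
  refine ⟨myS, ?_, mycard⟩
  rintro ⟨a, d, hd, h⟩
  have hd' : ¬(d 0 = 0 ∧ d 1 = 0 ∧ d 2 = 0) := by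
    rintro ⟨h0, h1, h2⟩
    apply hd
    funext j
    fin_cases j <;> assumption
  obtain ⟨i, hi⟩ := key (a 0) (a 1) (a 2) (d 0) (d 1) (d 2) hd'
  have := h i.val i.isLt
  simp only [myS, Finset.mem_filter, Finset.mem_univ, true_and, Pi.add_apply,
    Pi.smul_apply, smul_eq_mul] at this
  exact hi this
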